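/- For all a > 0 and s > 0, ∫₀^∞ e^{−s t} · e^{−a²/(4t)} / √(π t) dt = e^{−a √s} / √s. -/

import Mathlib

open MeasureTheory Set Real

private lemma hasDerivAt_glasser (b c : ℝ) {x : ℝ} (hx : x ≠ 0) :
    HasDerivAt (fun u : ℝ => b * u - c / u) (b + c / x ^ 2) x := by
  have h1 : HasDerivAt (fun u : ℝ => b * u) b x := by
    simpa using (hasDerivAt_id x).const_mul b
  have h2 : HasDerivAt (fun u : ℝ => c / u) (c * (-(x ^ 2)⁻¹)) x := by
    simpa [div_eq_mul_inv, mul_comm] using (hasDerivAt_inv hx).const_mul c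
  have : HasDerivAt (fun u : ℝ => b * u - c / u) (b - c * (-(x ^ 2)⁻¹)) x := h1.sub h2
  convert this using 1
  ring

private lemma glasser_image (b c : ℝ) (hb : 0 < b) (hc : 0 < c) :
    (fun u : ℝ => b * u - c / u) '' Ioi 0 = univ := by
  set f : ℝ → ℝ := fun u => b * u - c / u with hfdef
  apply eq_univ_of_forall
  intro y
  set x₁ : ℝ := min 1 (c / (b + |y| + 1)) with hx1def
  set x₂ : ℝ := max 1 ((y + c) / b) with hx2def
  have hx1pos : 0 < x₁ := lt_min one_pos (by positivity)
  have hx2pos : 0 < x₂ := lt_of_lt_of_le one_pos (le_max_left _ _)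
  have hf1 : f x₁ ≤ y := by
    have h1 : b * x₁ ≤ b := by
      have : x₁ ≤ 1 := min_le_left _ _
      nlinarith
    have h2 : b + |y| + 1 ≤ c / x₁ := by
      rw [le_div_iff₀ hx1pos]
      have : x₁ ≤ c / (b + |y| + 1) := min_le_right _ _
      have hpos : (0:ℝ) < b + |y| + 1 := by positivity
      calc (b + |y| + 1) * x₁ ≤ (b + |y| + 1) * (c / (b + |y| + 1)) := by nlinarith
        _ = c := by field_simp
    have : -|y| ≤ y := neg_abs_le y
    show b * x₁ - c / x₁ ≤ y
    linarith
  have hf2 : y ≤ f x₂ := by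
    have h1 : c / x₂ ≤ c := by
      rw [div_le_iff₀ hx2pos]
      have : (1:ℝ) ≤ x₂ := le_max_left _ _
      nlinarith
    have h2 : y + c ≤ b * x₂ := by
      have : (y + c) / b ≤ x₂ := le_max_right _ _
      calc y + c = b * ((y + c) / b) := by field_simp
        _ ≤ b * x₂ := by nlinarith
    show y ≤ b * x₂ - c / x₂
    linarith
  have hcont : ContinuousOn f (uIcc x₁ x₂) := by
    apply ContinuousOn.sub (Continuous.continuousOn (by continuity))
    apply ContinuousOn.div continuousOn_const continuousOn_id
    intro x hx
    have : (0:ℝ) < x := by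
      rcases le_total x₁ x₂ with h | h
      · rw [uIcc_of_le h] at hx; exact lt_of_lt_of_le hx1pos hx.1
      · rw [uIcc_of_ge h] at hx; exact lt_of_lt_of_le hx2pos hx.1
    exact ne_of_gt this
  have hsub : uIcc x₁ x₂ ⊆ Ioi 0 := by
    intro x hx
    rcases le_total x₁ x₂ with h | h
    · rw [uIcc_of_le h] at hx; exact lt_of_lt_of_le hx1pos hx.1
    · rw [uIcc_of_ge h] at hx; exact lt_of_lt_of_le hx2pos hx.1
  have : y ∈ uIcc (f x₁) (f x₂) := by
    rw [uIcc_of_le (le_trans hf1 hf2)]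
    exact ⟨hf1, hf2⟩
  obtain ⟨x, hx, hfx⟩ := intermediate_value_uIcc hcont this
  exact ⟨x, hsub hx, hfx⟩

private lemma glasser_integral (b c : ℝ) (hb : 0 < b) (hc : 0 < c) :
    ∫ u in Ioi (0:ℝ), Real.exp (-(b * u - c / u) ^ 2)
      = Real.sqrt Real.pi / (2 * b) := by
  set f : ℝ → ℝ := fun u => b * u - c / u with hfdef
  have hderiv : ∀ x ∈ Ioi (0:ℝ), HasDerivWithinAt f (b + c / x ^ 2) (Ioi 0) x :=
    fun x hx => (hasDerivAt_glasser b c (ne_of_gt hx)).hasDerivWithinAt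
  have hinj : InjOn f (Ioi 0) := by
    apply StrictMonoOn.injOn
    apply strictMonoOn_of_deriv_pos (convex_Ioi 0)
    · intro x hx
      exact ((hasDerivAt_glasser b c (ne_of_gt hx)).continuousAt).continuousWithinAt
    · intro x hx
      rw [interior_Ioi] at hx
      rw [(hasDerivAt_glasser b c (ne_of_gt hx)).deriv]
      positivity
  have himg := glasser_image b c hb hc
  -- change of variables: Gaussian pulled back
  have hcv : ∫ x : ℝ, Real.exp (-x ^ 2)
      = ∫ u in Ioi (0:ℝ), |b + c / u ^ 2| • Real.exp (-(f u) ^ 2) := by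
    rw [← setIntegral_univ, ← himg]
    exact integral_image_eq_integral_abs_deriv_smul measurableSet_Ioi hderiv hinj _
  have hgauss : ∫ x : ℝ, Real.exp (-x ^ 2) = Real.sqrt Real.pi := by
    simpa using integral_gaussian 1
  -- symmetry substitution φ u = c / (b * u)
  set φ : ℝ → ℝ := fun u => c / (b * u) with hφdef
  have hφimg : φ '' Ioi 0 = Ioi 0 := by
    apply subset_antisymm
    · rintro _ ⟨u, hu, rfl⟩
      simp only [hφdef]
      have : (0:ℝ) < u := hu
      exact div_pos hc (by positivity)
    · intro y hy
      have hy' : (0:ℝ) < y := hy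
      refine ⟨c / (b * y), div_pos hc (by positivity), ?_⟩
      simp only [hφdef]
      field_simp
  have hφderiv : ∀ x ∈ Ioi (0:ℝ),
      HasDerivWithinAt φ (-(c / b) / x ^ 2) (Ioi 0) x := by
    intro x hx
    have hx0 : x ≠ 0 := ne_of_gt hx
    have : HasDerivAt (fun u : ℝ => (c / b) / u) ((c / b) * (-(x ^ 2)⁻¹)) x := by
      simpa [div_eq_mul_inv, mul_comm] using (hasDerivAt_inv hx0).const_mul (c / b)
    have h2 : HasDerivAt φ ((c / b) * (-(x ^ 2)⁻¹)) x := by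
      apply this.congr_of_eventuallyEq
      filter_upwards [eventually_ne_nhds hx0] with u hu
      simp only [hφdef]
      field_simp
    rw [show c / b * -(x ^ 2)⁻¹ = -(c / b) / x ^ 2 by ring] at h2
    exact h2.hasDerivWithinAt
  have hφinj : InjOn φ (Ioi 0) := by
    intro x hx y hy h
    simp only [hφdef] at h
    have hx' : (0:ℝ) < x := hx
    have hy' : (0:ℝ) < y := hy
    have h' : c * (b * y) = c * (b * x) :=
      (div_eq_div_iff (by positivity) (by positivity)).mp h
    have h'' := mul_left_cancel₀ (ne_of_gt hc) h'
    exact (mul_left_cancel₀ (ne_of_gt hb) h'').symm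
  have hsym : ∫ u in Ioi (0:ℝ), Real.exp (-(f u) ^ 2)
      = ∫ u in Ioi (0:ℝ), |(-(c / b) / u ^ 2)| • Real.exp (-(f (φ u)) ^ 2) := by
    conv_lhs => rw [← hφimg]
    exact integral_image_eq_integral_abs_deriv_smul measurableSet_Ioi hφderiv hφinj _
  have hfφ : ∀ u ∈ Ioi (0:ℝ), f (φ u) = -(f u) := by
    intro u hu
    have hu' : (0:ℝ) < u := hu
    simp only [hfdef, hφdef]
    field_simp
    ring
  -- I and J
  set I : ℝ := ∫ u in Ioi (0:ℝ), Real.exp (-(f u) ^ 2) with hIdef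
  set J : ℝ := ∫ u in Ioi (0:ℝ), (c / u ^ 2) * Real.exp (-(f u) ^ 2) with hJdef
  have hJI : I = b⁻¹ * J := by
    rw [hsym, hJdef, ← integral_const_mul]
    apply setIntegral_congr_fun measurableSet_Ioi
    intro u hu
    have hu' : (0:ℝ) < u := hu
    simp only [smul_eq_mul]
    rw [hfφ u hu]
    simp only [neg_sq]
    rw [abs_div, abs_neg, abs_of_nonneg (le_of_lt (div_pos hc hb)),
      abs_of_nonneg (by positivity : (0:ℝ) ≤ u ^ 2)]
    field_simp
  -- integrability of exp(-(f u)^2) on Ioi 0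
  have hIint : IntegrableOn (fun u => Real.exp (-(f u) ^ 2)) (Ioi (0:ℝ)) := by
    apply Integrable.mono'
      ((integrable_exp_neg_mul_sq (by positivity : (0:ℝ) < b ^ 2)).const_mul
        (Real.exp (2 * b * c))).integrableOn
    · refine (Measurable.aestronglyMeasurable ?_).restrict
      apply Real.measurable_exp.comp
      apply Measurable.neg
      apply Measurable.pow_const
      exact (measurable_const.mul measurable_id).sub (measurable_const.div measurable_id)
    · filter_upwards [ae_restrict_mem measurableSet_Ioi] with u hu
      have hu' : (0:ℝ) < u := hu
      rw [Real.norm_eq_abs, abs_of_nonneg (Real.exp_nonneg _), ← Real.exp_add]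
      apply Real.exp_le_exp.mpr
      have : (f u) ^ 2 = b ^ 2 * u ^ 2 - 2 * b * c + c ^ 2 / u ^ 2 := by
        simp only [hfdef]
        field_simp
        ring
      have h2 : (0:ℝ) ≤ c ^ 2 / u ^ 2 := by positivity
      have h3 : -f u ^ 2 = -(b ^ 2 * u ^ 2) + 2 * b * c - c ^ 2 / u ^ 2 := by
        rw [this]; ring
      rw [h3]
      linarith
  have hSint : IntegrableOn (fun u => |b + c / u ^ 2| • Real.exp (-(f u) ^ 2)) (Ioi (0:ℝ)) := by
    have h2 : IntegrableOn (fun w : ℝ => Real.exp (-w ^ 2)) (f '' Ioi 0) := by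
      rw [himg, integrableOn_univ]
      simpa using integrable_exp_neg_mul_sq (one_pos : (0:ℝ) < 1)
    exact (integrableOn_image_iff_integrableOn_abs_deriv_smul measurableSet_Ioi hderiv hinj
      (fun w : ℝ => Real.exp (-w ^ 2))).mp h2
  have hJint : IntegrableOn (fun u => (c / u ^ 2) * Real.exp (-(f u) ^ 2)) (Ioi (0:ℝ)) := by
    apply Integrable.congr (hSint.sub (hIint.const_mul b))
    filter_upwards [ae_restrict_mem measurableSet_Ioi] with u hu
    have hu' : (0:ℝ) < u := hu
    simp only [Pi.sub_apply, smul_eq_mul]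
    rw [abs_of_nonneg (by positivity : (0:ℝ) ≤ b + c / u ^ 2)]
    ring
  have hsplit : Real.sqrt Real.pi = b * I + J := by
    rw [← hgauss, hcv]
    have : ∫ u in Ioi (0:ℝ), |b + c / u ^ 2| • Real.exp (-(f u) ^ 2)
        = ∫ u in Ioi (0:ℝ), (b * Real.exp (-(f u) ^ 2)
            + (c / u ^ 2) * Real.exp (-(f u) ^ 2)) := by
      apply setIntegral_congr_fun measurableSet_Ioi
      intro u hu
      have hu' : (0:ℝ) < u := hu
      simp only [smul_eq_mul]
      rw [abs_of_nonneg (by positivity : (0:ℝ) ≤ b + c / u ^ 2)]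
      ring
    rw [this, integral_add (hIint.const_mul b) hJint, integral_const_mul]
  have hJ : J = b * I := by
    rw [hJI]
    field_simp
  have h2 : Real.sqrt Real.pi = 2 * b * I := by
    rw [hsplit, hJ]; ring
  show I = Real.sqrt Real.pi / (2 * b)
  rw [h2]
  field_simp

theorem stmt_4 (a s : ℝ) (ha : 0 < a) (hs : 0 < s) :
    ∫ t in Set.Ioi (0 : ℝ),
        Real.exp (-s * t) * (Real.exp (-a ^ 2 / (4 * t)) / Real.sqrt (Real.pi * t)) =
      Real.exp (-a * Real.sqrt s) / Real.sqrt s := by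
  set b : ℝ := Real.sqrt s with hbdef
  have hb : 0 < b := Real.sqrt_pos.mpr hs
  have hb2 : b ^ 2 = s := Real.sq_sqrt hs.le
  set c : ℝ := a / 2 with hcdef
  have hc : 0 < c := by positivity
  -- substitution t = u^2
  have hderiv : ∀ x ∈ Ioi (0:ℝ),
      HasDerivWithinAt (fun u : ℝ => u ^ 2) (2 * x) (Ioi 0) x := by
    intro x hx
    simpa using ((hasDerivAt_pow 2 x).hasDerivWithinAt)
  have hinj : InjOn (fun u : ℝ => u ^ 2) (Ioi 0) := by
    intro x hx y hy h
    have h' : x ^ 2 = y ^ 2 := h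
    have hx' : (0:ℝ) < x := hx
    have hy' : (0:ℝ) < y := hy
    nlinarith
  have himg : (fun u : ℝ => u ^ 2) '' Ioi 0 = Ioi 0 := by
    apply subset_antisymm
    · rintro _ ⟨u, hu, rfl⟩
      have : (0:ℝ) < u := hu
      exact pow_pos this 2
    · intro y hy
      have hy' : (0:ℝ) < y := hy
      exact ⟨Real.sqrt y, Real.sqrt_pos.mpr hy', Real.sq_sqrt hy'.le⟩
  have hcv : ∫ t in Set.Ioi (0:ℝ),
        Real.exp (-s * t) * (Real.exp (-a ^ 2 / (4 * t)) / Real.sqrt (Real.pi * t))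
      = ∫ u in Ioi (0:ℝ), |2 * u| • (Real.exp (-s * u ^ 2)
          * (Real.exp (-a ^ 2 / (4 * u ^ 2)) / Real.sqrt (Real.pi * u ^ 2))) := by
    conv_lhs => rw [← himg]
    exact integral_image_eq_integral_abs_deriv_smul measurableSet_Ioi hderiv hinj _
  rw [hcv]
  have hsimp : ∀ u ∈ Ioi (0:ℝ), |2 * u| • (Real.exp (-s * u ^ 2)
      * (Real.exp (-a ^ 2 / (4 * u ^ 2)) / Real.sqrt (Real.pi * u ^ 2)))
      = (2 / Real.sqrt Real.pi * Real.exp (-a * b))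
          * Real.exp (-(b * u - c / u) ^ 2) := by
    intro u hu
    have hu' : (0:ℝ) < u := hu
    have hsq : Real.sqrt (Real.pi * u ^ 2) = Real.sqrt Real.pi * u := by
      rw [Real.sqrt_mul Real.pi_pos.le, Real.sqrt_sq hu'.le]
    rw [hsq, abs_of_nonneg (by positivity : (0:ℝ) ≤ 2 * u)]
    have hexp : -s * u ^ 2 + -a ^ 2 / (4 * u ^ 2)
        = -a * b + -(b * u - c / u) ^ 2 := by
      have : (b * u - c / u) ^ 2 = b ^ 2 * u ^ 2 - 2 * b * c + c ^ 2 / u ^ 2 := by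
        field_simp
        ring
      rw [this, hb2]
      simp only [hcdef]
      field_simp
      ring
    have hπ : Real.sqrt Real.pi ≠ 0 := ne_of_gt (Real.sqrt_pos.mpr Real.pi_pos)
    have hu0 : u ≠ 0 := ne_of_gt hu'
    rw [smul_eq_mul]
    have hmul : Real.exp (-s * u ^ 2) * Real.exp (-a ^ 2 / (4 * u ^ 2))
        = Real.exp (-a * b) * Real.exp (-(b * u - c / u) ^ 2) := by
      rw [← Real.exp_add, hexp, Real.exp_add]
    rw [show 2 * u * (Real.exp (-s * u ^ 2)
          * (Real.exp (-a ^ 2 / (4 * u ^ 2)) / (Real.sqrt Real.pi * u)))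
        = (Real.exp (-s * u ^ 2) * Real.exp (-a ^ 2 / (4 * u ^ 2)))
            * (2 * u / (Real.sqrt Real.pi * u)) from by ring]
    rw [mul_comm (Real.sqrt Real.pi) u, mul_comm (2:ℝ) u, mul_div_mul_left 2 (Real.sqrt Real.pi) hu0, hmul]
    ring
  rw [setIntegral_congr_fun measurableSet_Ioi hsimp, integral_const_mul,
    glasser_integral b c hb hc]
  have hπ : (0:ℝ) < Real.sqrt Real.pi := Real.sqrt_pos.mpr Real.pi_pos
  field_simp
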